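/- Let A and B be inf semi-lattices and let their tensor product A ⊗ B be the inf semi-lattice generated by pure tensors a ⊗ b subject only to the bi-homomorphism relations (a ⊓ a') ⊗ b = (a ⊗ b) ⊓ (a' ⊗ b) and a ⊗ (b ⊓ b') = (a ⊗ b) ⊓ (a ⊗ b'). For elements a, a₁, …, aₙ ∈ A and b, b₁, …, bₙ ∈ B, the inequality ⊓ᵢ (aᵢ ⊗ bᵢ) ≤ a ⊗ b holds in A ⊗ B if and only if there exists an n-ary lattice polynomial p with p(a₁, …, aₙ) ≤ a in A and p*(b₁, …, bₙ) ≤ b in B, where p* is the polynomial obtained by dualizing the lattice operations of p. -/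

import Mathlib

/-- `n`-ary lattice polynomials: terms built from `n` variables using meet and join. -/
inductive LatPoly (n : ℕ) where
  | var : Fin n → LatPoly n
  | meet : LatPoly n → LatPoly n → LatPoly n
  | join : LatPoly n → LatPoly n → LatPoly n

namespace LatPoly

/-- Evaluation of a lattice polynomial at a tuple of lattice elements. -/
def eval {L : Type*} [Lattice L] {n : ℕ} (v : Fin n → L) : LatPoly n → L
  | .var i => v i
  | .meet p q => eval v p ⊓ eval v q
  | .join p q => eval v p ⊔ eval v q

/-- The dual polynomial `p*`, obtained by swapping meets and joins. -/
def dual {n : ℕ} : LatPoly n → LatPoly n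
  | .var i => .var i
  | .meet p q => .join (dual p) (dual q)
  | .join p q => .meet (dual p) (dual q)

end LatPoly

universe u

/-- In the semilattice tensor product `C = A ⊗ B` of two lattices (the universal recipient of a
bi-homomorphism `ι` from `A × B`), `⊓ᵢ (aᵢ ⊗ bᵢ) ≤ a ⊗ b` holds iff there is an `n`-ary lattice
polynomial `p` with `p(a₁, …, aₙ) ≤ a` and `p*(b₁, …, bₙ) ≤ b`. -/
theorem tensor_le_iff_lattice_polynomial
    {A B C : Type u} [Lattice A] [Lattice B] [SemilatticeInf C]
    (ι : A → B → C)
    (hbi1 : ∀ a a' : A, ∀ b : B, ι (a ⊓ a') b = ι a b ⊓ ι a' b)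
    (hbi2 : ∀ a : A, ∀ b b' : B, ι a (b ⊓ b') = ι a b ⊓ ι a b')
    (huniv : ∀ (D : Type u) [SemilatticeInf D] (f : A → B → D),
      (∀ a a' : A, ∀ b : B, f (a ⊓ a') b = f a b ⊓ f a' b) →
      (∀ a : A, ∀ b b' : B, f a (b ⊓ b') = f a b ⊓ f a b') →
      ∃! g : C → D, (∀ x y : C, g (x ⊓ y) = g x ⊓ g y) ∧ ∀ a b, g (ι a b) = f a b)
    (n : ℕ) (hn : 0 < n) (as : Fin n → A) (bs : Fin n → B) (a : A) (b : B) :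
    Finset.univ.inf' (Finset.univ_nonempty_iff.mpr ⟨⟨0, hn⟩⟩)
        (fun i => ι (as i) (bs i)) ≤ ι a b ↔
      ∃ p : LatPoly n, p.eval as ≤ a ∧ p.dual.eval bs ≤ b := by
  classical
  have mono1 : ∀ {x x' : A} (y : B), x ≤ x' → ι x y ≤ ι x' y := by
    intro x x' y h
    have h2 : ι x y = ι x y ⊓ ι x' y := by rw [← hbi1, inf_eq_left.mpr h]
    rw [h2]; exact inf_le_right
  have mono2 : ∀ (x : A) {y y' : B}, y ≤ y' → ι x y ≤ ι x y' := by
    intro x y y' h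
    have h2 : ι x y = ι x y ⊓ ι x y' := by rw [← hbi2, inf_eq_left.mpr h]
    rw [h2]; exact inf_le_right
  set ne : (Finset.univ : Finset (Fin n)).Nonempty :=
    Finset.univ_nonempty_iff.mpr ⟨⟨0, hn⟩⟩
  constructor
  · intro h
    set P : A → B → Prop := fun x y => ∃ p : LatPoly n, p.eval as ≤ x ∧ p.dual.eval bs ≤ y
      with hP
    have Pm1 : ∀ {x x'} (y), x ≤ x' → P x y → P x' y := by
      rintro x x' y hxx ⟨p, h1, h2⟩; exact ⟨p, h1.trans hxx, h2⟩
    have Pm2 : ∀ (x) {y y'}, y ≤ y' → P x y → P x y' := by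
      rintro x y y' hyy ⟨p, h1, h2⟩; exact ⟨p, h1, h2.trans hyy⟩
    have f1 : ∀ x x' : A, ∀ y : B, P (x ⊓ x') y ↔ (P x y ∧ P x' y) := by
      intro x x' y
      constructor
      · intro hp; exact ⟨Pm1 y inf_le_left hp, Pm1 y inf_le_right hp⟩
      · rintro ⟨⟨p, hp1, hp2⟩, ⟨q, hq1, hq2⟩⟩
        exact ⟨.meet p q, inf_le_inf hp1 hq1, sup_le hp2 hq2⟩
    have f2 : ∀ x : A, ∀ y y' : B, P x (y ⊓ y') ↔ (P x y ∧ P x y') := by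
      intro x y y'
      constructor
      · intro hp; exact ⟨Pm2 x inf_le_left hp, Pm2 x inf_le_right hp⟩
      · rintro ⟨⟨p, hp1, hp2⟩, ⟨q, hq1, hq2⟩⟩
        exact ⟨.join p q, sup_le hp1 hq1, inf_le_inf hp2 hq2⟩
    obtain ⟨g, ⟨ginf, gι⟩, -⟩ :=
      huniv (ULift.{u} Prop) (fun x y => ULift.up (P x y))
        (by intro x x' y
            apply ULift.down_injective
            show P (x ⊓ x') y = (P x y ∧ P x' y)
            exact propext (f1 x x' y))
        (by intro x y y'
            apply ULift.down_injective
            show P x (y ⊓ y') = (P x y ∧ P x y')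
            exact propext (f2 x y y'))
    have gmono : Monotone g := by
      intro x y hxy
      have : g x = g x ⊓ g y := by rw [← ginf, inf_eq_left.mpr hxy]
      rw [this]; exact inf_le_right
    have gT : (ULift.up True : ULift.{u} Prop) ≤
        g (Finset.univ.inf' ne (fun i => ι (as i) (bs i))) := by
      have hG : ∀ (s : Finset (Fin n)) (hs : s.Nonempty),
          (ULift.up True : ULift.{u} Prop) ≤ g (s.inf' hs (fun i => ι (as i) (bs i))) := by
        intro s hs
        induction hs using Finset.Nonempty.cons_induction with
        | singleton i =>
          rw [Finset.inf'_singleton, gι]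
          show True → P (as i) (bs i)
          exact fun _ => ⟨.var i, le_refl _, le_refl _⟩
        | cons i s his hs' ih =>
          rw [Finset.inf'_cons (H := hs'), ginf]
          refine le_inf ?_ ih
          rw [gι]
          show True → P (as i) (bs i)
          exact fun _ => ⟨.var i, le_refl _, le_refl _⟩
      exact hG _ ne
    have final : (ULift.up True : ULift.{u} Prop) ≤ ULift.up (P a b) := by
      calc (ULift.up True : ULift.{u} Prop)
          ≤ g (Finset.univ.inf' ne (fun i => ι (as i) (bs i))) := gT
        _ ≤ g (ι a b) := gmono h
        _ = ULift.up (P a b) := gι a b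
    exact final trivial
  · rintro ⟨p, hpa, hpb⟩
    have key : ∀ q : LatPoly n,
        Finset.univ.inf' ne (fun i => ι (as i) (bs i)) ≤ ι (q.eval as) (q.dual.eval bs) := by
      intro q
      induction q with
      | var i => exact Finset.inf'_le _ (Finset.mem_univ i)
      | meet p q ihp ihq =>
        show _ ≤ ι (p.eval as ⊓ q.eval as) (p.dual.eval bs ⊔ q.dual.eval bs)
        rw [hbi1]
        exact le_inf (ihp.trans (mono2 _ le_sup_left)) (ihq.trans (mono2 _ le_sup_right))
      | join p q ihp ihq =>
        show _ ≤ ι (p.eval as ⊔ q.eval as) (p.dual.eval bs ⊓ q.dual.eval bs)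
        rw [hbi2]
        exact le_inf (ihp.trans (mono1 _ le_sup_left)) (ihq.trans (mono1 _ le_sup_right))
    exact (key p).trans ((mono1 _ hpa).trans (mono2 _ hpb))
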